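/- Define g(x) = (1/8)((3 tanh x / tanh 3x) − 1) = tanh²x / (3 + tanh²x), with power series expansion g(x) = Σ_{i≥1} b_i x^(2i). Then for all i ≥ 1, ν_2(b_i) = κ_2(i) − 1. -/

import Mathlib

/-- The formal power series of `tanh x` over `ℚ`:
`tanh x = Σ_{i ≥ 1} 2^(2i)(2^(2i)-1) β_(2i) / (2i)! · x^(2i-1)`. -/
noncomputable def tanhPS : PowerSeries ℚ :=
  PowerSeries.mk fun n =>
    if Odd n then
      2 ^ (n + 1) * (2 ^ (n + 1) - 1) * bernoulli (n + 1) / (Nat.factorial (n + 1))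
    else 0

namespace Stmt16Aux

open PowerSeries Finset

lemma L1 : (X : PowerSeries ℚ) * (tanhPS - 1) =
    rescale 4 (bernoulliPowerSeries ℚ) - rescale 2 (bernoulliPowerSeries ℚ) := by
  ext n
  cases n with
  | zero =>
    rw [map_sub, coeff_rescale, coeff_rescale]
    simp
  | succ n =>
    rw [map_sub, coeff_succ_X_mul, map_sub, coeff_rescale, coeff_rescale]
    simp only [bernoulliPowerSeries, coeff_mk, tanhPS, map_sub, coeff_mk, coeff_one]
    rcases Nat.even_or_odd n with he | ho
    · rcases Nat.eq_zero_or_pos n with rfl | hn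
      · norm_num [bernoulli_one]
      · have h1 : ¬ Odd n := Nat.not_odd_iff_even.mpr he
        have h2 : bernoulli (n+1) = 0 := by
          rw [bernoulli_eq_bernoulli'_of_ne_one (by omega)]
          exact bernoulli'_eq_zero_of_odd (by simpa using he.add_one) (by omega)
        rw [if_neg h1, if_neg (by omega), h2]
        simp
    · have h1 : n ≠ 0 := by rintro rfl; simp at ho
      rw [if_pos ho, if_neg h1]
      have h4 : (4:ℚ)^(n+1) = 2^(n+1) * 2^(n+1) := by
        rw [show (4:ℚ) = 2*2 by norm_num, mul_pow]
      have hf : ((n+1).factorial : ℚ) ≠ 0 := by exact_mod_cast (Nat.factorial_pos _).ne'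
      simp only [Algebra.algebraMap_self, RingHom.id_apply]
      field_simp
      rw [h4]; ring

lemma tanh_id : tanhPS * (rescale 2 (exp ℚ) + 1) = rescale 2 (exp ℚ) - 1 := by
  set E : PowerSeries ℚ := rescale 2 (exp ℚ) with hE
  set W : PowerSeries ℚ := bernoulliPowerSeries ℚ with hW
  have hX : (X : PowerSeries ℚ) ≠ 0 := X_ne_zero
  have hEm1 : E - 1 ≠ 0 := by
    intro h
    have := congrArg (coeff 1) h
    rw [map_sub, coeff_rescale, coeff_exp, coeff_one] at this
    norm_num at this
  have key : W * (exp ℚ - 1) = X := bernoulliPowerSeries_mul_exp_sub_one ℚ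
  have h2 : rescale (2:ℚ) W * (E - 1) = 2 * X := by
    have := congrArg (rescale (2:ℚ)) key
    rw [map_mul, map_sub, map_one, rescale_X] at this
    rw [this, show (C (2:ℚ)) = (2:ℚ⟦X⟧) from map_ofNat C 2]
  have hF : rescale (4:ℚ) (exp ℚ) = E * E := by
    rw [hE, exp_mul_exp_eq_exp_add]; norm_num
  have h4 : rescale (4:ℚ) W * (E*E - 1) = 4 * X := by
    have := congrArg (rescale (4:ℚ)) key
    rw [map_mul, map_sub, map_one, rescale_X, hF] at this
    rw [this, show (C (4:ℚ)) = (4:ℚ⟦X⟧) from map_ofNat C 4]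
  have main : (X * (E-1)) * ((tanhPS - 1) * ((E-1)*(E+1))) =
      (X * (E-1)) * ((-2) * (E-1)) := by
    have expand : E*E - 1 = (E-1)*(E+1) := by ring
    calc (X * (E-1)) * ((tanhPS - 1) * ((E-1)*(E+1)))
        = (rescale 4 W - rescale 2 W) * ((E-1)*((E-1)*(E+1))) := by
          rw [← L1]; ring
      _ = (rescale 4 W * (E*E-1)) * (E-1) - (rescale 2 W * (E-1)) * ((E-1)*(E+1)) := by
          rw [expand]; ring
      _ = (4*X)*(E-1) - (2*X)*((E-1)*(E+1)) := by rw [h2, h4]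
      _ = (X * (E-1)) * ((-2) * (E-1)) := by ring
  have hc : (tanhPS - 1) * ((E-1)*(E+1)) = (-2) * (E-1) :=
    mul_left_cancel₀ (mul_ne_zero hX hEm1) main
  have hc2 : (E-1) * ((tanhPS - 1) * (E+1)) = (E-1) * (-2) := by
    linear_combination hc
  have hc3 : (tanhPS - 1) * (E+1) = -2 := mul_left_cancel₀ hEm1 hc2
  linear_combination hc3

noncomputable def Dc (n : ℕ) : ℚ := ((2:ℚ)^n + (-2:ℚ)^n) / n.factorial

lemma Dc_odd {n : ℕ} (h : Odd n) : Dc n = 0 := by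
  rw [Dc, Odd.neg_pow h]
  ring

lemma Dc_even {n : ℕ} (h : Even n) : Dc n = 2^(n+1) / n.factorial := by
  rw [Dc, Even.neg_pow h]
  ring_nf

lemma hrec_lemma (g : PowerSeries ℚ) (hg : g * (3 + tanhPS ^ 2) = tanhPS ^ 2) :
    ∀ n : ℕ, 4 * ((∑ k ∈ Finset.range (n+1), (coeff k g) * Dc (n-k)) + coeff n g)
    = Dc n - (if n = 0 then 2 else 0) := by
  set T : PowerSeries ℚ := tanhPS with hT
  set e : PowerSeries ℚ := exp ℚ with he
  set N : PowerSeries ℚ := rescale (-1 : ℚ) e with hN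
  set E : PowerSeries ℚ := rescale (2 : ℚ) e with hE
  set E' : PowerSeries ℚ := rescale (-2 : ℚ) e with hE'
  have htanh : T * (E + 1) = E - 1 := tanh_id
  have he_ne : e ≠ 0 := by
    intro h
    have := congrArg (constantCoeff) h
    rw [constantCoeff_exp] at this
    simp at this
  have heN : e * N = 1 := by
    have h := exp_mul_exp_eq_exp_add (1 : ℚ) (-1)
    rw [rescale_one] at h
    norm_num at h
    rw [hN]
    exact h
  have hee : e * e = E := by
    have h := exp_mul_exp_eq_exp_add (1 : ℚ) 1
    rw [rescale_one] at h
    norm_num at h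
    rw [h, hE, he]
  have hNN : N * N = E' := by
    have h := exp_mul_exp_eq_exp_add (-1 : ℚ) (-1)
    norm_num at h
    rw [hN, hE', he]
    exact h
  have hC : e * (e + N) = E + 1 := by rw [mul_add, hee, heN]
  have hS : e * (e - N) = E - 1 := by rw [mul_sub, hee, heN]
  have htc : T * (e + N) = e - N := by
    apply mul_left_cancel₀ he_ne
    calc e * (T * (e + N)) = T * (e * (e + N)) := by ring
      _ = T * (E + 1) := by rw [hC]
      _ = E - 1 := htanh
      _ = e * (e - N) := hS.symm
  have hCsq : (e + N)^2 = (E + E') + 2 := by linear_combination hee + hNN + 2*heN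
  have t2 : T^2 * (e + N)^2 = (E + E') - 2 := by
    have h1 : (T * (e+N))^2 = (e - N)^2 := by rw [htc]
    linear_combination h1 + hee + hNN - 2*heN
  have h5 : g * ((3:ℚ⟦X⟧) + T^2) * (e+N)^2 = T^2 * (e+N)^2 := by rw [hg]
  have main : 4 * g * ((E + E') + 1) = (E + E') - 2 := by
    linear_combination h5 + (1 - g) * t2 - 3 * g * hCsq
  have hmain' : (C 4) * (g * ((E + E') + 1)) = (E + E') - C 2 := by
    rw [map_ofNat, map_ofNat]
    linear_combination main
  intro n
  have hco := congrArg (coeff n) hmain'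
  rw [coeff_C_mul, mul_add, mul_one, map_add, coeff_mul,
    Finset.Nat.sum_antidiagonal_eq_sum_range_succ_mk, map_sub, coeff_C] at hco
  have hDc : ∀ m : ℕ, coeff m (E + E') = Dc m := by
    intro m
    rw [map_add, hE, hE', coeff_rescale, coeff_rescale, coeff_exp, Dc]
    simp only [Algebra.algebraMap_self, RingHom.id_apply]
    field_simp
  have hsum : ∀ k ∈ Finset.range (n+1),
      (coeff k g) * Dc (n-k) = (coeff (k, n-k).1) g * (coeff (k, n-k).2) (E + E') :=
    fun k _ => by rw [hDc]
  rw [Finset.sum_congr rfl hsum]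
  rw [show (n+1) = n.succ from rfl, hco, hDc]

section Arith

variable (G' : ℕ → ℚ)
variable (hrec : ∀ n : ℕ, 4 * ((∑ k ∈ Finset.range (n+1), G' k * Dc (n-k)) + G' n)
    = Dc n - (if n = 0 then 2 else 0))

include hrec

lemma G'_zero : G' 0 = 0 := by
  have h := hrec 0
  simp [Dc] at h
  linarith

lemma G'_odd : ∀ n, Odd n → G' n = 0 := by
  intro n
  induction n using Nat.strong_induction_on with
  | _ n ih =>
    intro hn
    have h := hrec n
    have hn0 : n ≠ 0 := by rintro rfl; simp at hn
    rw [if_neg hn0, Dc_odd hn, sub_zero] at h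
    have hsum : ∀ k ∈ Finset.range (n+1), G' k * Dc (n-k) = if k = n then 2 * G' n else 0 := by
      intro k hk
      rw [Finset.mem_range] at hk
      rcases eq_or_ne k n with rfl | hne
      · simp [Dc]; ring
      · have hkn : k < n := by omega
        rw [if_neg hne]
        rcases Nat.even_or_odd k with he | ho
        · have : Odd (n - k) := by
            rcases hn with ⟨a, ha⟩; rcases he with ⟨b, hb⟩
            exact ⟨a - b, by omega⟩
          rw [Dc_odd this, mul_zero]
        · rw [ih k hkn ho, zero_mul]
    rw [Finset.sum_congr rfl hsum, Finset.sum_ite_eq' (Finset.range (n+1)) n] at h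
    simp at h
    linarith

end Arith

lemma even_sum (f : ℕ → ℚ) (hf : ∀ k, Odd k → f k = 0) (m : ℕ) :
    ∑ k ∈ Finset.range (2*m+1), f k = ∑ j ∈ Finset.range (m+1), f (2*j) := by
  induction m with
  | zero => simp
  | succ m ih =>
    rw [show 2*(m+1)+1 = (2*m+1)+1+1 by ring, Finset.sum_range_succ, Finset.sum_range_succ,
      ih, Finset.sum_range_succ (f := fun j => f (2*j)) (n := m+1)]
    rw [hf (2*m+1) ⟨m, by ring⟩, add_zero]
    ring_nf

section Arith2

variable (G' : ℕ → ℚ)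

noncomputable def d (m : ℕ) : ℚ := 2 * (2*m).factorial * G' (2*m) / 4^m

variable (hrec : ∀ n : ℕ, 4 * ((∑ k ∈ Finset.range (n+1), G' k * Dc (n-k)) + G' n)
    = Dc n - (if n = 0 then 2 else 0))

include hrec

lemma key : ∀ m : ℕ, 1 ≤ m →
    3 * d G' m + 2 * ∑ k ∈ Finset.range m, ((2*m).choose (2*k) : ℚ) * d G' k = 1 := by
  intro m hm
  have h := hrec (2*m)
  rw [if_neg (by omega), sub_zero] at h
  rw [even_sum (fun k => G' k * Dc (2*m - k))
    (fun k hk => by show G' k * Dc (2*m-k) = 0; rw [G'_odd G' hrec k hk, zero_mul]) m] at h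
  have harg : ∀ j ∈ Finset.range (m+1), G' (2*j) * Dc (2*m - 2*j) = G' (2*j) * Dc (2*(m-j)) := by
    intro j hj
    rw [Finset.mem_range] at hj
    congr 2
    omega
  rw [Finset.sum_congr rfl harg, Finset.sum_range_succ] at h
  have hDc2m : Dc (2*m) = 2^(2*m+1) / (2*m).factorial := Dc_even ⟨m, by ring⟩
  have hfac : ∀ n : ℕ, ((n.factorial : ℚ)) ≠ 0 := fun n => by
    exact_mod_cast (Nat.factorial_pos n).ne'
  set c : ℚ := ((2*m).factorial : ℚ) / 2^(2*m+1) with hc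
  have hc_ne : (2:ℚ)^(2*m+1) ≠ 0 := by positivity
  have hr : c * Dc (2*m) = 1 := by
    rw [hDc2m, hc]; field_simp
  have hterm : ∀ j ∈ Finset.range m,
      (c * 4) * (G' (2*j) * Dc (2*(m-j))) = 2 * (((2*m).choose (2*j) : ℚ) * d G' j) := by
    intro j hj
    rw [Finset.mem_range] at hj
    have hjm : 2*j ≤ 2*m := by omega
    have hch : ((2*m).choose (2*j) : ℚ) * (2*j).factorial * (2*m - 2*j).factorial
        = (2*m).factorial := by
      exact_mod_cast congrArg (Nat.cast (R := ℚ)) (Nat.choose_mul_factorial_mul_factorial hjm)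
    have hsub : 2*(m-j) = 2*m - 2*j := by omega
    rw [Dc_even ⟨m - j, by ring⟩, d, hc, hsub]
    have h4 : (4:ℚ)^j = 2^(2*j) := by
      rw [show (4:ℚ) = 2^2 by norm_num, ← pow_mul]
    have hpow : (2:ℚ)^(2*m+1) = 2^(2*m-2*j+1) * 2^(2*j) := by
      rw [← pow_add]; congr 1; omega
    field_simp [h4]
    rw [hpow]
    linear_combination (-(G' (2*j) * 2^(2*m-2*j) * 2^(j*2) * 8)) * hch
        + (((2*m).factorial : ℚ) * G' (2*j) * 2^(2*m-2*j) * 8) * h4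
  have hmm : Dc (2*(m-m)) = 2 := by norm_num [Dc]
  have hdm : c * (4 * (G' (2*m) * Dc (2*(m-m)) + G' (2*m))) = 3 * d G' m := by
    rw [hmm, d, hc]
    have h4 : (4:ℚ)^m = 2^(2*m) := by
      rw [show (4:ℚ) = 2^2 by norm_num, ← pow_mul]
    rw [h4]
    field_simp
    try ring
    try norm_num
  calc 3 * d G' m + 2 * ∑ k ∈ Finset.range m, ((2*m).choose (2*k) : ℚ) * d G' k
      = c * (4 * (G' (2*m) * Dc (2*(m-m)) + G' (2*m)))
        + ∑ k ∈ Finset.range m, (c * 4) * (G' (2*k) * Dc (2*(m-k))) := by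
        rw [hdm, Finset.sum_congr rfl hterm, Finset.mul_sum]
    _ = c * (4 * ((∑ j ∈ Finset.range m, G' (2*j) * Dc (2*(m-j)) + G' (2*m) * Dc (2*(m-m))) + G' (2*m))) := by
        rw [← Finset.mul_sum]
        ring
    _ = c * Dc (2*m) := by rw [← h]
    _ = 1 := hr

end Arith2

lemma val_sum_nonneg {F : ℕ → ℚ} {n : ℕ} (h : ∀ i, i < n → 0 ≤ padicValRat 2 (F i))
    (h0 : ∑ i ∈ Finset.range n, F i ≠ 0) :
    0 ≤ padicValRat 2 (∑ i ∈ Finset.range n, F i) := by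
  induction n with
  | zero => simp at h0
  | succ n ih =>
    rw [Finset.sum_range_succ] at h0 ⊢
    by_cases hs : ∑ i ∈ Finset.range n, F i = 0
    · rw [hs, zero_add]; exact h n (by omega)
    · refine le_trans ?_ (padicValRat.min_le_padicValRat_add (p := 2) h0)
      exact le_min (ih (fun i hi => h i (by omega)) hs) (h n (by omega))

lemma val3 : padicValRat 2 (3:ℚ) = 0 := by
  rw [show (3:ℚ) = ((3:ℕ):ℚ) by norm_num, padicValRat.of_nat,
    padicValNat.eq_zero_of_not_dvd (by norm_num)]
  simp

lemma dval (dd : ℕ → ℚ) (d_zero : dd 0 = 0)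
    (hkey : ∀ m : ℕ, 1 ≤ m →
      3 * dd m + 2 * ∑ k ∈ Finset.range m, ((2*m).choose (2*k) : ℚ) * dd k = 1) :
    ∀ m : ℕ, 1 ≤ m → padicValRat 2 (dd m) = 0 ∧ dd m ≠ 0 := by
  intro m
  induction m using Nat.strong_induction_on with
  | _ m ih =>
    intro hm
    set S : ℚ := ∑ k ∈ Finset.range m, ((2*m).choose (2*k) : ℚ) * dd k with hS
    have hk := hkey m hm
    have hdm : dd m = (1 - 2*S)/3 := by
      rw [hS]; field_simp; linarith [hk]
    have hvS : S ≠ 0 → 0 ≤ padicValRat 2 S := by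
      intro hSne
      refine val_sum_nonneg (fun i hi => ?_) hSne
      rcases Nat.eq_zero_or_pos i with rfl | hi1
      · simp [d_zero]
      · obtain ⟨hvi, hdi⟩ := ih i hi hi1
        have hch : ((2*m).choose (2*i) : ℚ) ≠ 0 := by
          have : 0 < (2*m).choose (2*i) := Nat.choose_pos (by omega)
          exact_mod_cast this.ne'
        rw [padicValRat.mul hch hdi, hvi, add_zero]
        rw [show ((2*m).choose (2*i) : ℚ) = (((2*m).choose (2*i) : ℕ) : ℚ) by norm_num,
          padicValRat.of_nat]
        simp
    have hnum : padicValRat 2 (1 - 2*S) = 0 ∧ (1 - 2*S) ≠ 0 := by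
      by_cases hSne : S = 0
      · simp [hSne]
      · have hv2S : 1 ≤ padicValRat 2 (2*S) := by
          rw [padicValRat.mul (by norm_num) hSne]
          have := hvS hSne
          have h2 : padicValRat 2 (2:ℚ) = 1 := by
            simpa using padicValRat.self (p := 2) (by norm_num)
          omega
        have hne : 1 + (-(2*S)) ≠ 0 := by
          intro h
          have h2S : 2*S = 1 := by linarith
          rw [h2S] at hv2S
          simp [padicValRat.one] at hv2S
        have := padicValRat.add_eq_of_lt (p := 2) hne (by norm_num)
          (by intro h; simp at h; tauto)
          (by rw [padicValRat.neg, padicValRat.one]; omega)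
        constructor
        · rw [show (1:ℚ) - 2*S = 1 + (-(2*S)) by ring, this, padicValRat.one]
        · intro h; exact hne (by linarith)
    constructor
    · rw [hdm, padicValRat.div (p := 2) hnum.2 (by norm_num), hnum.1, val3]
      simp
    · rw [hdm]
      exact div_ne_zero hnum.2 (by norm_num)

lemma final (G' : ℕ → ℚ)
    (hdval : ∀ m : ℕ, 1 ≤ m → padicValRat 2 (d G' m) = 0 ∧ d G' m ≠ 0)
    (i : ℕ) (hi : 1 ≤ i) :
    padicValRat 2 (G' (2 * i)) = ((Nat.digits 2 i).sum : ℤ) - 1 := by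
  obtain ⟨hv, hne⟩ := hdval i hi
  have hG : G' (2*i) ≠ 0 := by
    intro h
    apply hne
    rw [d, h]
    simp
  have hfac : ((2*i).factorial : ℚ) ≠ 0 := by
    exact_mod_cast (Nat.factorial_pos _).ne'
  have h2f : (2:ℚ) * (2*i).factorial ≠ 0 := by positivity
  have hnum : (2:ℚ) * (2*i).factorial * G' (2*i) ≠ 0 := mul_ne_zero h2f hG
  have h4 : ((4:ℚ)^i) ≠ 0 := by positivity
  rw [d, padicValRat.div (p := 2) hnum h4, padicValRat.mul (p := 2) h2f hG,
    padicValRat.mul (p := 2) (by norm_num) hfac] at hv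
  have hv2 : padicValRat 2 (2:ℚ) = 1 := by
    simpa using padicValRat.self (p := 2) (by norm_num)
  have hvfac : padicValRat 2 (((2*i).factorial : ℚ)) = (padicValNat 2 ((2*i).factorial) : ℤ) := by
    rw [show (((2*i).factorial : ℕ) : ℚ) = (((2*i).factorial : ℕ) : ℚ) from rfl, padicValRat.of_nat]
  have hv4 : padicValRat 2 ((4:ℚ)^i) = 2 * i := by
    rw [show (4:ℚ) = 2^2 by norm_num, ← pow_mul, padicValRat.pow (p := 2) (2:ℚ), hv2]
    push_cast
    ring
  have hleg : (2 - 1) * padicValNat 2 ((2*i).factorial) = 2*i - (Nat.digits 2 (2*i)).sum :=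
    sub_one_mul_padicValNat_factorial (p := 2) (2*i)
  have hdig : Nat.digits 2 (2*i) = 0 :: Nat.digits 2 i := by
    rw [Nat.digits_def' (by norm_num : 1 < 2) (by omega : 0 < 2*i)]
    congr 1
    · omega
    · congr 1
      omega
  have hsum : (Nat.digits 2 (2*i)).sum = (Nat.digits 2 i).sum := by rw [hdig]; simp
  have hle : (Nat.digits 2 (2*i)).sum ≤ 2*i := Nat.digit_sum_le 2 (2*i)
  have hfacval : (padicValNat 2 ((2*i).factorial) : ℤ)
      = 2*i - ((Nat.digits 2 i).sum : ℤ) := by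
    rw [hsum] at hleg hle
    omega
  rw [hv2, hvfac, hv4, hfacval] at hv
  omega

end Stmt16Aux

theorem stmt16 (g : PowerSeries ℚ)
    (hg : g * (3 + tanhPS ^ 2) = tanhPS ^ 2) (i : ℕ) (hi : 1 ≤ i) :
    padicValRat 2 (PowerSeries.coeff (2 * i) g) = ((Nat.digits 2 i).sum : ℤ) - 1 := by
  set G' : ℕ → ℚ := fun n => PowerSeries.coeff n g with hG'
  have hrec := Stmt16Aux.hrec_lemma g hg
  have hd0 : Stmt16Aux.d G' 0 = 0 := by
    rw [Stmt16Aux.d]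
    have := Stmt16Aux.G'_zero G' hrec
    simp only [Nat.mul_zero] at this ⊢
    rw [this]
    simp
  have hkey := Stmt16Aux.key G' hrec
  have hdval := Stmt16Aux.dval (Stmt16Aux.d G') hd0 hkey
  exact Stmt16Aux.final G' hdval i hi
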